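/- arXiv:2601.05928 — 2 statements merged into one kernel-verified Lean document; each statement's English description precedes it below -/
import Mathlib

section
/- On the geometric grid p_j = exp(−h(M−j)) (0 ≤ j ≤ M) with grading parameter h > 0 and M ≥ 3, the matrix F_h is tridiagonal with zero diagonal, and its superdiagonal entries f_j := (F_h)_{j,j+1} = −(F_h)_{j+1,j} are given explicitly by: f_0 = √(1 + e^{−h})/(4 sinh(h/2)); f_j = 1/(4 sinh(h/2)) for 1 ≤ j ≤ M−2; and f_{M−1} = √(1 + e^{h})/(4 sinh(h/2)). -/
open Matrix

noncomputable def sbpWeight (M : ℕ) (p : ℕ → ℝ) (j : ℕ) : ℝ :=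
  if j = 0 then (p 1 - p 0) / 2
  else if j = M then (p M - p (M - 1)) / 2
  else (p (j + 1) - p (j - 1)) / 2

noncomputable def sbpW (M : ℕ) (p : ℕ → ℝ) : Matrix (Fin (M + 1)) (Fin (M + 1)) ℝ :=
  Matrix.diagonal fun j => sbpWeight M p (j : ℕ)

noncomputable def sbpQ (M : ℕ) : Matrix (Fin (M + 1)) (Fin (M + 1)) ℝ :=
  Matrix.of fun i j =>
    if (i : ℕ) + 1 = (j : ℕ) then 1 / 2
    else if (j : ℕ) + 1 = (i : ℕ) then -(1 / 2)
    else if (i : ℕ) = 0 ∧ (j : ℕ) = 0 then -(1 / 2)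
    else if (i : ℕ) = M ∧ (j : ℕ) = M then 1 / 2
    else 0

noncomputable def sbpD (M : ℕ) (p : ℕ → ℝ) : Matrix (Fin (M + 1)) (Fin (M + 1)) ℝ :=
  (sbpW M p)⁻¹ * sbpQ M

noncomputable def sbpB (M : ℕ) : Matrix (Fin (M + 1)) (Fin (M + 1)) ℝ :=
  Matrix.diagonal fun j => if (j : ℕ) = 0 then -1 else if (j : ℕ) = M then 1 else 0

noncomputable def sbpP (M : ℕ) (p : ℕ → ℝ) : Matrix (Fin (M + 1)) (Fin (M + 1)) ℝ :=
  Matrix.diagonal fun j => p (j : ℕ)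

noncomputable def sbpFw (M : ℕ) (p : ℕ → ℝ) : Matrix (Fin (M + 1)) (Fin (M + 1)) ℝ :=
  (1 / 2 : ℝ) • (sbpP M p * sbpD M p + sbpD M p * sbpP M p) -
    (1 / 2 : ℝ) • ((sbpW M p)⁻¹ * sbpB M * sbpP M p)

noncomputable def sbpWhalf (M : ℕ) (p : ℕ → ℝ) : Matrix (Fin (M + 1)) (Fin (M + 1)) ℝ :=
  Matrix.diagonal fun j => Real.sqrt (sbpWeight M p (j : ℕ))

noncomputable def sbpWhalfInv (M : ℕ) (p : ℕ → ℝ) : Matrix (Fin (M + 1)) (Fin (M + 1)) ℝ :=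
  Matrix.diagonal fun j => (Real.sqrt (sbpWeight M p (j : ℕ)))⁻¹

noncomputable def sbpFh (M : ℕ) (p : ℕ → ℝ) : Matrix (Fin (M + 1)) (Fin (M + 1)) ℝ :=
  sbpWhalf M p * sbpFw M p * sbpWhalfInv M p

/-- The geometric grid `p_j = exp(−h(M−j))`. -/
noncomputable def geoGrid (M : ℕ) (h : ℝ) : ℕ → ℝ :=
  fun j => Real.exp (-(h * ((M : ℝ) - (j : ℝ))))

/-- The explicit off-diagonal entries of `F_h` on the geometric grid. -/
noncomputable def geoF (M : ℕ) (h : ℝ) (j : ℕ) : ℝ :=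
  (if j = 0 then Real.sqrt (1 + Real.exp (-h))
    else if j = M - 1 then Real.sqrt (1 + Real.exp h)
    else 1) / (4 * Real.sinh (h / 2))

/- ### Auxiliary lemmas -/

private lemma sbpW_inv (M : ℕ) (p : ℕ → ℝ) (hw : ∀ j : Fin (M+1), sbpWeight M p (j:ℕ) ≠ 0) :
    (sbpW M p)⁻¹ = Matrix.diagonal fun j : Fin (M+1) => (sbpWeight M p (j : ℕ))⁻¹ := by
  apply Matrix.inv_eq_right_inv
  rw [sbpW, Matrix.diagonal_mul_diagonal]
  have : (fun i : Fin (M+1) => sbpWeight M p i * (sbpWeight M p i)⁻¹) = fun _ => (1:ℝ) :=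
    funext fun j => mul_inv_cancel₀ (hw j)
  rw [this, Matrix.diagonal_one]

private lemma sbpFh_apply (M : ℕ) (p : ℕ → ℝ)
    (hw' : ∀ j : Fin (M+1), 0 < sbpWeight M p (j:ℕ)) (i j : Fin (M+1)) :
    sbpFh M p i j =
      Real.sqrt (sbpWeight M p (i:ℕ)) *
        ((p (i:ℕ) + p (j:ℕ)) * (sbpWeight M p (i:ℕ))⁻¹ * sbpQ M i j / 2
          - (if i = j then (if (i:ℕ) = 0 then (-1:ℝ) else if (i:ℕ) = M then 1 else 0)
              * p (i:ℕ) * (sbpWeight M p (i:ℕ))⁻¹ / 2 else 0))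
        * (Real.sqrt (sbpWeight M p (j:ℕ)))⁻¹ := by
  rw [sbpFh, sbpFw, sbpD, sbpW_inv M p (fun j => ne_of_gt (hw' j))]
  by_cases hij : i = j
  · subst hij
    simp only [sbpWhalf, sbpWhalfInv, sbpP, sbpB, Matrix.diagonal_mul, Matrix.mul_diagonal,
      Matrix.sub_apply, Matrix.smul_apply, Matrix.add_apply, Matrix.diagonal_apply_eq,
      smul_eq_mul, if_pos rfl]
    split_ifs <;> ring
  · simp only [sbpWhalf, sbpWhalfInv, sbpP, sbpB, Matrix.diagonal_mul, Matrix.mul_diagonal,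
      Matrix.sub_apply, Matrix.smul_apply, Matrix.add_apply, Matrix.diagonal_apply_ne _ hij,
      if_neg hij, smul_eq_mul]
    ring

private lemma eq_of_sq' {a b : ℝ} (ha : 0 ≤ a) (hb : 0 ≤ b) (h : a^2 = b^2) : a = b := by
  rw [← Real.sqrt_sq ha, ← Real.sqrt_sq hb, h]

private lemma keylem (a b c : ℝ) (ha : 0 < a) (hb : 0 < b) :
    Real.sqrt a * (c * a⁻¹ * (1/2) / 2 - 0) * (Real.sqrt b)⁻¹ = c / (4 * Real.sqrt (a*b)) := by
  have sa : Real.sqrt a ≠ 0 := Real.sqrt_ne_zero'.mpr ha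
  have sb : Real.sqrt b ≠ 0 := Real.sqrt_ne_zero'.mpr hb
  have h2 : Real.sqrt a * Real.sqrt a = a := Real.mul_self_sqrt ha.le
  have h3 : a⁻¹ = (Real.sqrt a * Real.sqrt a)⁻¹ := by rw [h2]
  rw [sub_zero, Real.sqrt_mul ha.le, h3, mul_inv]
  field_simp
  ring

private lemma keylem' (a b c : ℝ) (ha : 0 < a) (hb : 0 < b) :
    Real.sqrt b * (c * b⁻¹ * (-(1/2)) / 2 - 0) * (Real.sqrt a)⁻¹ = -(c / (4 * Real.sqrt (a*b))) := by
  have h := keylem b a c hb ha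
  rw [mul_comm b a] at h
  linear_combination -h

private lemma geo_pos (M : ℕ) (h : ℝ) (j : ℕ) : 0 < geoGrid M h j := Real.exp_pos _

private lemma geo_step (M : ℕ) (h : ℝ) (j : ℕ) :
    geoGrid M h (j+1) = Real.exp h * geoGrid M h j := by
  simp only [geoGrid, ← Real.exp_add]
  congr 1
  push_cast
  ring

private lemma w_zero (M : ℕ) (h : ℝ) :
    sbpWeight M (geoGrid M h) 0 = (Real.exp h - 1) * geoGrid M h 0 / 2 := by
  rw [sbpWeight, if_pos rfl]
  have h1 : geoGrid M h 1 = Real.exp h * geoGrid M h 0 := geo_step M h 0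
  rw [h1]; ring

private lemma w_mid (M : ℕ) (h : ℝ) (j : ℕ) (hj0 : j ≠ 0) (hjM : j ≠ M) :
    sbpWeight M (geoGrid M h) j = (Real.exp h - (Real.exp h)⁻¹) * geoGrid M h j / 2 := by
  rw [sbpWeight, if_neg hj0, if_neg hjM]
  obtain ⟨k, rfl⟩ : ∃ k, j = k+1 := ⟨j-1, (Nat.succ_pred_eq_of_pos (Nat.pos_of_ne_zero hj0)).symm⟩
  simp only [Nat.add_sub_cancel]
  rw [geo_step, geo_step]
  have he : Real.exp h ≠ 0 := (Real.exp_pos h).ne'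
  field_simp

private lemma w_last (M : ℕ) (hM : 3 ≤ M) (h : ℝ) :
    sbpWeight M (geoGrid M h) M = (1 - (Real.exp h)⁻¹) * geoGrid M h M / 2 := by
  rw [sbpWeight, if_neg (by omega), if_pos rfl]
  have hidx : M - 1 + 1 = M := by omega
  have hstepM : geoGrid M h M = Real.exp h * geoGrid M h (M-1) := by
    have := geo_step M h (M-1); rwa [hidx] at this
  rw [hstepM]
  have he : Real.exp h ≠ 0 := (Real.exp_pos h).ne'
  field_simp

private lemma w_pos (M : ℕ) (hM : 3 ≤ M) (h : ℝ) (hh : 0 < h) (j : ℕ) :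
    0 < sbpWeight M (geoGrid M h) j := by
  have he : 1 < Real.exp h := Real.one_lt_exp_iff.mpr hh
  have hei : (Real.exp h)⁻¹ < 1 := by
    rw [← Real.exp_neg]; exact Real.exp_lt_one_iff.mpr (by linarith)
  rcases eq_or_ne j 0 with rfl | hj0
  · rw [w_zero M h]; nlinarith [geo_pos M h 0]
  rcases eq_or_ne j M with hjM | hjM
  · rw [hjM, w_last M hM h]; nlinarith [geo_pos M h M]
  · rw [w_mid M h j hj0 hjM]; nlinarith [geo_pos M h j]

private lemma val_case (h q A B N : ℝ) (hh : 0 < h) (hq : 0 < q) (hA : 0 < A) (hB : 0 < B)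
    (hN : 0 ≤ N)
    (hid : 4 * Real.sinh (h/2)^2 * (1 + Real.exp h)^2 = A * B * Real.exp h * N^2) :
    (q + Real.exp h * q) / (4 * Real.sqrt ((A * q / 2) * (B * (Real.exp h * q) / 2))) =
      N / (4 * Real.sinh (h/2)) := by
  have he : 0 < Real.exp h := Real.exp_pos h
  have hs : 0 < Real.sinh (h/2) := Real.sinh_pos_iff.mpr (by linarith)
  have hW : 0 < (A * q / 2) * (B * (Real.exp h * q) / 2) := by positivity
  have hsq : 0 < Real.sqrt ((A * q / 2) * (B * (Real.exp h * q) / 2)) := Real.sqrt_pos.mpr hW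
  apply eq_of_sq'
  · apply div_nonneg (by nlinarith) (by positivity)
  · exact div_nonneg hN (by nlinarith)
  · rw [div_pow, div_pow, mul_pow, mul_pow, Real.sq_sqrt hW.le,
      div_eq_div_iff (by nlinarith) (by nlinarith)]
    linear_combination (4*q^2) * hid

private lemma exp_sq (h : ℝ) : Real.exp h = Real.exp (h/2) ^ 2 := by
  rw [sq, ← Real.exp_add]; ring_nf

/-- On the geometric grid `p_j = exp(−h(M−j))` with `h > 0` and `M ≥ 3`,
the matrix `F_h` is tridiagonal with zero diagonal, and its superdiagonal entries
`f_j = (F_h)_{j,j+1} = −(F_h)_{j+1,j}` are given by the explicit formula `geoF`. -/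
theorem sbpFh_geometric_grid (M : ℕ) (hM : 3 ≤ M) (h : ℝ) (hh : 0 < h) :
    (∀ i j : Fin (M + 1), ((i : ℕ) + 2 ≤ (j : ℕ) ∨ (j : ℕ) + 2 ≤ (i : ℕ)) →
      sbpFh M (geoGrid M h) i j = 0) ∧
    (∀ j : Fin (M + 1), sbpFh M (geoGrid M h) j j = 0) ∧
    (∀ j : ℕ, ∀ hj : j < M,
      sbpFh M (geoGrid M h) ⟨j, Nat.lt_succ_of_lt hj⟩ ⟨j + 1, Nat.succ_lt_succ hj⟩ =
        geoF M h j ∧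
      sbpFh M (geoGrid M h) ⟨j + 1, Nat.succ_lt_succ hj⟩ ⟨j, Nat.lt_succ_of_lt hj⟩ =
        -geoF M h j) := by
  set p := geoGrid M h with hp
  have hw' : ∀ jf : Fin (M+1), 0 < sbpWeight M p (jf:ℕ) := fun jf => w_pos M hM h hh jf
  have hE0 : Real.exp (h/2) ≠ 0 := (Real.exp_pos _).ne'
  have hE1 : 1 < Real.exp h := Real.one_lt_exp_iff.mpr hh
  have hEi : (Real.exp h)⁻¹ < 1 := by
    rw [← Real.exp_neg]; exact Real.exp_lt_one_iff.mpr (by linarith)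
  have hEpos : 0 < Real.exp h := Real.exp_pos h
  refine ⟨?_, ?_, ?_⟩
  · -- far off-diagonal
    intro i j hfar
    rw [sbpFh_apply M p hw' i j]
    have hij : i ≠ j := by
      intro hcon; subst hcon; omega
    have hQ : sbpQ M i j = 0 := by
      rw [sbpQ]; simp only [Matrix.of_apply]
      split_ifs <;> first | rfl | (exfalso; omega)
    rw [hQ, if_neg hij]; ring
  · -- diagonal
    intro jf
    rw [sbpFh_apply M p hw' jf jf, if_pos rfl]
    rcases eq_or_ne (jf:ℕ) 0 with h0 | h0
    · have hQ : sbpQ M jf jf = -(1/2) := by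
        rw [sbpQ]; simp only [Matrix.of_apply]
        split_ifs <;> first | rfl | (exfalso; omega)
      rw [hQ, if_pos h0]; ring
    rcases eq_or_ne (jf:ℕ) M with hm | hm
    · have hQ : sbpQ M jf jf = 1/2 := by
        rw [sbpQ]; simp only [Matrix.of_apply]
        split_ifs <;> first | rfl | (exfalso; omega)
      rw [hQ, if_neg h0, if_pos hm]; ring
    · have hQ : sbpQ M jf jf = 0 := by
        rw [sbpQ]; simp only [Matrix.of_apply]
        split_ifs <;> first | rfl | (exfalso; omega)
      rw [hQ, if_neg h0, if_neg hm]; ring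
  · -- sub/super diagonal
    intro j hj
    have hS : (p j + p (j+1)) /
        (4 * Real.sqrt (sbpWeight M p j * sbpWeight M p (j+1))) = geoF M h j := by
      rcases eq_or_ne j 0 with rfl | hj0
      · -- j = 0
        rw [w_zero M h, w_mid M h 1 one_ne_zero (by omega)]
        have h1 : geoGrid M h 1 = Real.exp h * geoGrid M h 0 := geo_step M h 0
        rw [hp, h1, geoF, if_pos rfl]
        refine val_case h _ _ _ _ hh (geo_pos M h 0) (by linarith) (by nlinarith)
          (Real.sqrt_nonneg _) ?_
        rw [Real.sq_sqrt (by positivity), Real.sinh_eq, Real.exp_neg h, Real.exp_neg (h/2),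
          exp_sq h]
        field_simp
        ring
      rcases eq_or_ne j (M-1) with rfl | hjM1
      · -- j = M - 1
        have hidx : M - 1 + 1 = M := by omega
        rw [hidx, w_mid M h (M-1) (by omega) (by omega), w_last M hM h]
        have hstepM : geoGrid M h M = Real.exp h * geoGrid M h (M-1) := by
          have := geo_step M h (M-1); rwa [hidx] at this
        rw [hp, hstepM, geoF, if_neg (by omega), if_pos rfl]
        refine val_case h _ _ _ _ hh (geo_pos M h (M-1)) (by nlinarith) (by linarith)
          (Real.sqrt_nonneg _) ?_
        rw [Real.sq_sqrt (by positivity), Real.sinh_eq, Real.exp_neg (h/2), exp_sq h]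
        field_simp
        ring
      · -- middle
        rw [w_mid M h j hj0 (by omega), w_mid M h (j+1) (by omega) (by omega)]
        rw [hp, geo_step M h j, geoF, if_neg hj0, if_neg hjM1]
        refine val_case h _ _ _ _ hh (geo_pos M h j) (by nlinarith) (by nlinarith)
          zero_le_one ?_
        rw [Real.sinh_eq, Real.exp_neg (h/2), exp_sq h]
        field_simp
        ring
    constructor
    · rw [sbpFh_apply M p hw']
      have hne : (⟨j, Nat.lt_succ_of_lt hj⟩ : Fin (M+1)) ≠ ⟨j + 1, Nat.succ_lt_succ hj⟩ := by
        simp [Fin.ext_iff]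
      have hQ : sbpQ M ⟨j, Nat.lt_succ_of_lt hj⟩ ⟨j + 1, Nat.succ_lt_succ hj⟩ = 1/2 := by
        rw [sbpQ]; simp only [Matrix.of_apply, Fin.val_mk]
        split_ifs <;> first | rfl | (exfalso; omega)
      rw [hQ, if_neg hne, keylem _ _ _ (hw' ⟨j, Nat.lt_succ_of_lt hj⟩)
        (hw' ⟨j + 1, Nat.succ_lt_succ hj⟩)]
      exact hS
    · rw [sbpFh_apply M p hw']
      have hne : (⟨j + 1, Nat.succ_lt_succ hj⟩ : Fin (M+1)) ≠ ⟨j, Nat.lt_succ_of_lt hj⟩ := by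
        simp [Fin.ext_iff]
      have hQ : sbpQ M ⟨j + 1, Nat.succ_lt_succ hj⟩ ⟨j, Nat.lt_succ_of_lt hj⟩ = -(1/2) := by
        rw [sbpQ]; simp only [Matrix.of_apply, Fin.val_mk]
        split_ifs <;> first | rfl | (exfalso; omega)
      rw [hQ, if_neg hne, keylem' _ _ _ (hw' ⟨j, Nat.lt_succ_of_lt hj⟩)
        (hw' ⟨j + 1, Nat.succ_lt_succ hj⟩), neg_eq_iff_eq_neg, neg_neg, ← hS, add_comm]
end

section
/- Discrete pathwise recovery: Let F be a d_A × d_A complex matrix and r, l ∈ ℂ^{d_A} satisfy l† F^k r = 1 for every integer k ≥ 0. Let A, K, B_1, …, B_J be N × N complex matrices, V_0 := I_A ⊗ A + (F − I_A) ⊗ K, V_j := I_A ⊗ B_j. Then for every n ≥ 1 and arbitrary complex scalars τ_1, …, τ_n and c_{m,j} (1 ≤ m ≤ n, 1 ≤ j ≤ J), the time-ordered products satisfy (l† ⊗ I_N) · ∏_{m=n}^{1} ( I_{A} ⊗ I_N + τ_m V_0 + Σ_{j=1}^{J} c_{m,j} V_j ) · (r ⊗ I_N) = ∏_{m=n}^{1}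 ( I_N + τ_m A + Σ_{j=1}^{J} c_{m,j} B_j ), where ∏_{m=n}^{1} denotes the product with the factor m = n leftmost. -/
open Matrix Kronecker

noncomputable def dilV {dA N J : ℕ} (F : Matrix (Fin dA) (Fin dA) ℂ)
    (A K : Matrix (Fin N) (Fin N) ℂ) (B : Fin J → Matrix (Fin N) (Fin N) ℂ) :
    Fin (J + 1) → Matrix (Fin dA × Fin N) (Fin dA × Fin N) ℂ :=
  Fin.cases ((1 : Matrix (Fin dA) (Fin dA) ℂ) ⊗ₖ A +
      (F - (1 : Matrix (Fin dA) (Fin dA) ℂ)) ⊗ₖ K)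
    (fun j => (1 : Matrix (Fin dA) (Fin dA) ℂ) ⊗ₖ B j)

noncomputable def readL {dA N : ℕ} (l : Fin dA → ℂ) :
    Matrix (Fin N) (Fin dA × Fin N) ℂ :=
  Matrix.of fun i p => star (l p.1) * (if p.2 = i then 1 else 0)

noncomputable def embedR {dA N : ℕ} (r : Fin dA → ℂ) :
    Matrix (Fin dA × Fin N) (Fin N) ℂ :=
  Matrix.of fun p i => r p.1 * (if p.2 = i then 1 else 0)

/-- One time step of the dilated discrete evolution:
`I + τ_m V_0 + Σ_j c_{m,j} V_j`. -/
noncomputable def dilStep {dA N J : ℕ} (F : Matrix (Fin dA) (Fin dA) ℂ)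
    (A K : Matrix (Fin N) (Fin N) ℂ) (B : Fin J → Matrix (Fin N) (Fin N) ℂ)
    {n : ℕ} (τ : Fin n → ℂ) (c : Fin n → Fin J → ℂ) (m : Fin n) :
    Matrix (Fin dA × Fin N) (Fin dA × Fin N) ℂ :=
  1 + τ m • dilV F A K B 0 + ∑ j : Fin J, c m j • dilV F A K B j.succ

/-- One time step of the original discrete evolution:
`I + τ_m A + Σ_j c_{m,j} B_j`. -/
noncomputable def sdeStep {N J : ℕ} (A : Matrix (Fin N) (Fin N) ℂ)
    (B : Fin J → Matrix (Fin N) (Fin N) ℂ) {n : ℕ}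
    (τ : Fin n → ℂ) (c : Fin n → Fin J → ℂ) (m : Fin n) :
    Matrix (Fin N) (Fin N) ℂ :=
  1 + τ m • A + ∑ j : Fin J, c m j • B j

/-! ### Auxiliary lemmas -/

lemma kron_mul_embedR {dA N : ℕ} (X : Matrix (Fin dA) (Fin dA) ℂ)
    (M : Matrix (Fin N) (Fin N) ℂ) (v : Fin dA → ℂ) :
    (X ⊗ₖ M) * embedR (N := N) v = embedR (N := N) (X *ᵥ v) * M := by
  ext ⟨a, b⟩ i
  simp only [Matrix.mul_apply, embedR, Matrix.of_apply, kroneckerMap_apply,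
    Fintype.sum_prod_type, mulVec, dotProduct, mul_ite, mul_one, mul_zero,
    ite_mul, zero_mul, Finset.sum_ite_eq', Finset.sum_ite_eq,
    Finset.mem_univ, if_true]
  rw [Finset.sum_mul]
  exact Finset.sum_congr rfl fun a' _ => by ring

lemma readL_mul_embedR {dA N : ℕ} (l v : Fin dA → ℂ) :
    readL (N := N) l * embedR (N := N) v = (star l ⬝ᵥ v) • (1 : Matrix (Fin N) (Fin N) ℂ) := by
  ext i i'
  simp only [Matrix.mul_apply, readL, embedR, Matrix.of_apply, Fintype.sum_prod_type,
    dotProduct, Matrix.smul_apply, Matrix.one_apply, mul_ite, mul_one, mul_zero,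
    ite_mul, zero_mul, Pi.star_apply, smul_eq_mul, Finset.sum_ite_eq',
    Finset.sum_ite_eq, Finset.mem_univ, if_true]
  by_cases h : i = i'
  · subst h; simp [mul_comm]
  · simp only [if_neg h, if_neg (fun hh : i' = i => h hh.symm), mul_zero,
      Finset.sum_const_zero]

lemma moment_sub_one {dA : ℕ} (F : Matrix (Fin dA) (Fin dA) ℂ) (r l : Fin dA → ℂ)
    (hmm : ∀ k : ℕ, star l ⬝ᵥ (F ^ k *ᵥ r) = 1) (k : ℕ) :
    star l ⬝ᵥ ((F - 1) ^ k *ᵥ r) = if k = 0 then 1 else 0 := by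
  have hc : Commute F (-1 : Matrix (Fin dA) (Fin dA) ℂ) := Commute.neg_one_right F
  have h1 : (F - 1 : Matrix (Fin dA) (Fin dA) ℂ) ^ k
      = ∑ m ∈ Finset.range (k + 1),
          F ^ m * (-1 : Matrix (Fin dA) (Fin dA) ℂ) ^ (k - m)
            * (k.choose m : Matrix (Fin dA) (Fin dA) ℂ) := by
    rw [sub_eq_add_neg, hc.add_pow]
  have h2 : star l ⬝ᵥ ((F - 1) ^ k *ᵥ r)
      = ∑ m ∈ Finset.range (k + 1), ((-1 : ℂ) ^ (k - m) * (k.choose m : ℂ)) := by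
    have hsum : ∀ (s : Finset ℕ) (f : ℕ → Matrix (Fin dA) (Fin dA) ℂ),
        (∑ m ∈ s, f m) *ᵥ r = ∑ m ∈ s, f m *ᵥ r := by
      intro s f
      induction s using Finset.induction_on with
      | empty => simp
      | insert a s h ih => simp [Finset.sum_insert h, Matrix.add_mulVec, ih]
    have hds : ∀ (s : Finset ℕ) (g : ℕ → Fin dA → ℂ),
        star l ⬝ᵥ (∑ m ∈ s, g m) = ∑ m ∈ s, star l ⬝ᵥ g m := by
      intro s g
      induction s using Finset.induction_on with
      | empty => simp
      | insert a s h ih => simp [Finset.sum_insert h, dotProduct_add, ih]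
    rw [h1, hsum, hds]
    refine Finset.sum_congr rfl fun m _ => ?_
    have e1 : (-1 : Matrix (Fin dA) (Fin dA) ℂ) ^ (k - m) = ((-1 : ℂ) ^ (k - m)) • 1 := by
      rw [show (-1 : Matrix (Fin dA) (Fin dA) ℂ) = (-1 : ℂ) • 1 by simp, smul_pow, one_pow]
    have e2 : ((k.choose m : ℕ) : Matrix (Fin dA) (Fin dA) ℂ) = ((k.choose m : ℂ)) • 1 := by
      rw [← Algebra.algebraMap_eq_smul_one, map_natCast]
    have : F ^ m * (-1 : Matrix (Fin dA) (Fin dA) ℂ) ^ (k - m)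
          * (k.choose m : Matrix (Fin dA) (Fin dA) ℂ)
        = ((-1 : ℂ) ^ (k - m) * (k.choose m : ℂ)) • F ^ m := by
      rw [e1, e2, mul_smul_comm, mul_one, mul_smul_comm, mul_one, smul_smul, mul_comm]
    rw [this, Matrix.smul_mulVec, dotProduct_smul, hmm m, smul_eq_mul, mul_one]
  rw [h2]
  have h3 : (∑ m ∈ Finset.range (k + 1), ((-1 : ℂ) ^ (k - m) * (k.choose m : ℂ)))
      = ((1 : ℂ) + (-1)) ^ k := by
    rw [add_pow]
    exact Finset.sum_congr rfl fun m _ => by ring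
  rw [h3]
  simp [zero_pow_eq]

lemma key_expansion {dA N : ℕ} (F : Matrix (Fin dA) (Fin dA) ℂ) (r : Fin dA → ℂ)
    (L : List (Matrix (Fin N) (Fin N) ℂ × Matrix (Fin N) (Fin N) ℂ)) :
    ∃ M : ℕ → Matrix (Fin N) (Fin N) ℂ,
      M 0 = (L.map Prod.fst).prod ∧ (∀ k, L.length < k → M k = 0) ∧
      (L.map fun p => (1 : Matrix (Fin dA) (Fin dA) ℂ) ⊗ₖ p.1 + (F - 1) ⊗ₖ p.2).prod
          * embedR (N := N) r
        = ∑ k ∈ Finset.range (L.length + 1), embedR (N := N) (((F - 1) ^ k) *ᵥ r) * M k := by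
  induction L with
  | nil =>
      refine ⟨fun k => if k = 0 then 1 else 0, by simp, ?_, ?_⟩
      · intro k hk
        simp [show k ≠ 0 by omega]
      · simp
  | cons p L ih =>
      obtain ⟨M, hM0, hMz, hP⟩ := ih
      set M' : ℕ → Matrix (Fin N) (Fin N) ℂ :=
        fun k => Nat.rec (p.1 * M 0) (fun k' _ => p.1 * M (k' + 1) + p.2 * M k') k with hM'
      have hM'0 : M' 0 = p.1 * M 0 := rfl
      have hM'succ : ∀ k, M' (k + 1) = p.1 * M (k + 1) + p.2 * M k := fun k => rfl
      refine ⟨M', by simp [hM'0, hM0], ?_, ?_⟩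
      · intro k hk
        simp only [List.length_cons] at hk
        cases k with
        | zero => omega
        | succ k' =>
            rw [hM'succ, hMz _ (by omega), hMz _ (by omega)]
            simp
      · simp only [List.map_cons, List.prod_cons, List.length_cons]
        rw [Matrix.mul_assoc, hP, Matrix.add_mul, Matrix.mul_sum, Matrix.mul_sum]
        have h1 : ∀ k, ((1 : Matrix (Fin dA) (Fin dA) ℂ) ⊗ₖ p.1)
              * (embedR (N := N) ((F - 1) ^ k *ᵥ r) * M k)
            = embedR (N := N) ((F - 1) ^ k *ᵥ r) * (p.1 * M k) := by
          intro k
          rw [← Matrix.mul_assoc, kron_mul_embedR, Matrix.one_mulVec, Matrix.mul_assoc]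
        have h2 : ∀ k, ((F - 1) ⊗ₖ p.2) * (embedR (N := N) ((F - 1) ^ k *ᵥ r) * M k)
            = embedR (N := N) ((F - 1) ^ (k + 1) *ᵥ r) * (p.2 * M k) := by
          intro k
          rw [← Matrix.mul_assoc, kron_mul_embedR, Matrix.mulVec_mulVec, ← pow_succ',
            Matrix.mul_assoc]
        simp only [h1, h2]
        rw [Finset.sum_range_succ'
          (fun k => embedR (N := N) ((F - 1) ^ k *ᵥ r) * M' k) (L.length + 1)]
        rw [Finset.sum_range_succ'
          (fun k => embedR (N := N) ((F - 1) ^ k *ᵥ r) * (p.1 * M k)) L.length]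
        simp only [pow_zero, Matrix.one_mulVec, hM'succ, hM'0]
        rw [add_comm _ (embedR (N := N) r * (p.1 * M 0)), add_comm _ (embedR (N := N) r * (p.1 * M 0)),
          add_assoc]
        congr 1
        have hz : embedR (N := N) ((F - 1) ^ (L.length + 1) *ᵥ r)
            * (p.1 * M (L.length + 1)) = 0 := by
          rw [hMz _ (by omega)]
          simp
        rw [show (∑ k ∈ Finset.range L.length,
              embedR (N := N) ((F - 1) ^ (k + 1) *ᵥ r) * (p.1 * M (k + 1)))
            = ∑ k ∈ Finset.range (L.length + 1),
              embedR (N := N) ((F - 1) ^ (k + 1) *ᵥ r) * (p.1 * M (k + 1)) by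
          rw [Finset.sum_range_succ, hz, add_zero]]
        rw [← Finset.sum_add_distrib]
        exact Finset.sum_congr rfl fun k _ => by rw [← Matrix.mul_add]

lemma dilStep_eq {dA N J : ℕ} (F : Matrix (Fin dA) (Fin dA) ℂ)
    (A K : Matrix (Fin N) (Fin N) ℂ) (B : Fin J → Matrix (Fin N) (Fin N) ℂ)
    {n : ℕ} (τ : Fin n → ℂ) (c : Fin n → Fin J → ℂ) (m : Fin n) :
    dilStep F A K B τ c m
      = (1 : Matrix (Fin dA) (Fin dA) ℂ) ⊗ₖ sdeStep A B τ c m + (F - 1) ⊗ₖ (τ m • K) := by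
  ext ⟨a, b⟩ ⟨a', b'⟩
  simp only [dilStep, sdeStep, dilV, Fin.cases_zero, Fin.cases_succ, Matrix.add_apply,
    Matrix.smul_apply, kroneckerMap_apply, Matrix.one_apply, Matrix.sub_apply,
    Matrix.sum_apply, Matrix.of_apply, smul_eq_mul, Prod.mk.injEq]
  by_cases ha : a = a' <;>
    simp [ha, Matrix.sum_apply, Matrix.one_apply] <;> ring

/-- **Discrete pathwise recovery.** For a moment-matching triple `(F, r, l)`
and arbitrary presampled scalars `τ_m`, `c_{m,j}`, the projected time-ordered product of
dilated steps (factor `m = n` leftmost) equals the time-ordered product of original steps. -/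
theorem discrete_pathwise_recovery (dA N J : ℕ) (hdA : 1 ≤ dA) (hN : 1 ≤ N)
    (F : Matrix (Fin dA) (Fin dA) ℂ) (r l : Fin dA → ℂ)
    (hmm : ∀ k : ℕ, star l ⬝ᵥ (F ^ k *ᵥ r) = 1)
    (A K : Matrix (Fin N) (Fin N) ℂ) (B : Fin J → Matrix (Fin N) (Fin N) ℂ)
    (n : ℕ) (hn : 1 ≤ n) (τ : Fin n → ℂ) (c : Fin n → Fin J → ℂ) :
    readL (N := N) l * (List.ofFn fun i => dilStep F A K B τ c (Fin.rev i)).prod * embedR (N := N) r =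
      (List.ofFn fun i => sdeStep A B τ c (Fin.rev i)).prod := by
  set L : List (Matrix (Fin N) (Fin N) ℂ × Matrix (Fin N) (Fin N) ℂ) :=
    List.ofFn (fun i : Fin n => (sdeStep A B τ c (Fin.rev i), τ (Fin.rev i) • K)) with hL
  have hmap : (L.map fun p => (1 : Matrix (Fin dA) (Fin dA) ℂ) ⊗ₖ p.1 + (F - 1) ⊗ₖ p.2)
      = List.ofFn fun i => dilStep F A K B τ c (Fin.rev i) := by
    rw [hL, List.map_ofFn]
    exact congrArg _ (funext fun i => (dilStep_eq F A K B τ c (Fin.rev i)).symm)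
  have hfst : L.map Prod.fst = List.ofFn fun i => sdeStep A B τ c (Fin.rev i) := by
    rw [hL, List.map_ofFn]
    rfl
  have hlen : L.length = n := by simp [hL]
  obtain ⟨M, hM0, hMz, hP⟩ := key_expansion F r L
  rw [← hmap, Matrix.mul_assoc, hP, Matrix.mul_sum]
  have heach : ∀ k, readL (N := N) l * (embedR (N := N) ((F - 1) ^ k *ᵥ r) * M k)
      = (if k = 0 then (1 : ℂ) else 0) • M k := by
    intro k
    rw [← Matrix.mul_assoc, readL_mul_embedR, moment_sub_one F r l hmm k,
      Matrix.smul_mul, Matrix.one_mul]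
  simp only [heach, ite_smul, one_smul, zero_smul]
  rw [Finset.sum_ite_eq' (Finset.range (L.length + 1)) 0 M]
  simp [hM0, hfst]
end
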